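/- Loss simplification at critical points: Let Y, Z ∈ ℝ^{d×n}, G := Y Zᵀ (ZZᵀ + λI)⁻¹ Z Yᵀ with eigendecomposition G = U Λ Uᵀ. Suppose W₂ ∈ ℝ^{d×k}, W₁ ∈ ℝ^{k×d} satisfy W₂W₁ = P Y Zᵀ (ZZᵀ + λI)⁻¹ where P is the orthogonal projection onto col(W₂) and P commutes with G, with Uᵀ P U block-diagonal having top-left diagonal block 𝒟. Then (in the λ → 0 limit) ‖Y - W₂W₁Z‖_F² = Tr(YYᵀ) - Tr(𝒟 Λ). -/
import Mathlib


open Matrix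

/-- Squared Frobenius norm. -/
noncomputable def frobSq {d n : ℕ} (M : Matrix (Fin d) (Fin n) ℝ) : ℝ :=
  ∑ i, ∑ j, (M i j) ^ 2

lemma frobSq_eq_trace {d n : ℕ} (M : Matrix (Fin d) (Fin n) ℝ) :
    frobSq M = Matrix.trace (M * Mᵀ) := by
  simp [frobSq, Matrix.trace, Matrix.diag, Matrix.mul_apply, sq]

/-- Loss simplification at critical points of the two-layer linear network (ridgeless
limit): `‖Y - W₂ W₁ Z‖_F² = Tr(Y Yᵀ) - Tr(𝒟 Λ)`, where `𝒟` is the top-left `r × r`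
diagonal block of `Uᵀ P U`. -/
theorem stmt18 {d n k r : ℕ}
    (Y Z : Matrix (Fin d) (Fin n) ℝ)
    (hZ : IsUnit (Z * Zᵀ).det)
    (G : Matrix (Fin d) (Fin d) ℝ)
    (hG : G = Y * Zᵀ * (Z * Zᵀ)⁻¹ * Z * Yᵀ)
    (U : Matrix (Fin d) (Fin d) ℝ) (hU : Uᵀ * U = 1)
    (L : Fin d → ℝ) (hGeig : G = U * Matrix.diagonal L * Uᵀ)
    (hLzero : ∀ i : Fin d, r ≤ (i : ℕ) → L i = 0)
    (W₂ : Matrix (Fin d) (Fin k) ℝ) (W₁ : Matrix (Fin k) (Fin d) ℝ)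
    (P : Matrix (Fin d) (Fin d) ℝ) (hPsymm : Pᵀ = P) (hPidem : P * P = P)
    (hPW : P * W₂ = W₂) (hPrange : ∃ M : Matrix (Fin k) (Fin d) ℝ, P = W₂ * M)
    (hcomm : P * G = G * P)
    (hcrit : W₂ * W₁ = P * Y * Zᵀ * (Z * Zᵀ)⁻¹)
    (hblock : ∀ i j : Fin d, (i : ℕ) < r → (j : ℕ) < r → i ≠ j → (Uᵀ * P * U) i j = 0) :
    frobSq (Y - W₂ * W₁ * Z) =
      Matrix.trace (Y * Yᵀ) -
        ∑ i : Fin d, (if (i : ℕ) < r then (Uᵀ * P * U) i i * L i else 0) := by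
  set S := (Z * Zᵀ)⁻¹ with hS
  have hSsym : Sᵀ = S := by
    rw [hS, Matrix.transpose_nonsing_inv, Matrix.transpose_mul, Matrix.transpose_transpose]
  have hinv : S * (Z * Zᵀ) = 1 := Matrix.nonsing_inv_mul _ hZ
  set A := W₂ * W₁ * Z with hA
  have hA' : A = P * Y * Zᵀ * S * Z := by rw [hA, hcrit]
  have hAt : Aᵀ = Zᵀ * S * Z * Yᵀ * P := by
    rw [hA']
    simp [Matrix.transpose_mul, hSsym, hPsymm, Matrix.mul_assoc]
  have hAY : A * Yᵀ = P * G := by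
    rw [hA', hG]
    simp [Matrix.mul_assoc]
  have hYA : Y * Aᵀ = (A * Yᵀ)ᵀ := by
    simp [Matrix.transpose_mul]
  have hQ : Zᵀ * S * Z * (Zᵀ * S * Z) = Zᵀ * S * Z := by
    calc Zᵀ * S * Z * (Zᵀ * S * Z) = Zᵀ * (S * (Z * Zᵀ)) * S * Z := by
          simp [Matrix.mul_assoc]
      _ = Zᵀ * S * Z := by rw [hinv]; simp [Matrix.mul_assoc]
  have hAA : A * Aᵀ = P * G * P := by
    rw [hAt, hA', hG]
    calc P * Y * Zᵀ * S * Z * (Zᵀ * S * Z * Yᵀ * P)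
        = P * Y * (Zᵀ * S * Z * (Zᵀ * S * Z)) * Yᵀ * P := by
          simp [Matrix.mul_assoc]
      _ = P * Y * (Zᵀ * S * Z) * Yᵀ * P := by rw [hQ]
      _ = P * (Y * Zᵀ * S * Z * Yᵀ) * P := by simp [Matrix.mul_assoc]
  have htrPGP : Matrix.trace (P * G * P) = Matrix.trace (P * G) := by
    rw [Matrix.trace_mul_cycle, hPidem]
  have htrPG : Matrix.trace (P * G) = ∑ i, (Uᵀ * P * U) i i * L i := by
    rw [hGeig]
    have : P * (U * Matrix.diagonal L * Uᵀ) = P * U * Matrix.diagonal L * Uᵀ := by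
      simp [Matrix.mul_assoc]
    rw [this, Matrix.trace_mul_cycle, ← Matrix.mul_assoc]
    simp [Matrix.trace, Matrix.diag, Matrix.mul_diagonal]
  have hsum : ∑ i, (Uᵀ * P * U) i i * L i
      = ∑ i : Fin d, (if (i : ℕ) < r then (Uᵀ * P * U) i i * L i else 0) := by
    apply Finset.sum_congr rfl
    intro i _
    by_cases h : (i : ℕ) < r
    · simp [h]
    · simp [h, hLzero i (le_of_not_gt h)]
  rw [frobSq_eq_trace]
  have hexpand : (Y - A) * (Y - A)ᵀ = Y * Yᵀ - Y * Aᵀ - A * Yᵀ + A * Aᵀ := by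
    rw [Matrix.transpose_sub, Matrix.sub_mul, Matrix.mul_sub, Matrix.mul_sub]
    abel
  rw [hexpand, Matrix.trace_add, Matrix.trace_sub, Matrix.trace_sub,
    hYA, Matrix.trace_transpose, hAY, hAA, htrPGP, htrPG, hsum]
  ring
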